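/- Let ℓ be a prime and let p be a prime such that p ≡ β² (mod 4ℓ) for some odd integer β. Then p is ℓ-Genocchi irregular. -/

import Mathlib

section AuxGenocchi
open Finset

lemma sum_pow_zmod (p m : ℕ) (hp : p.Prime) (hm : 0 < m) :
    ((∑ k ∈ range p, k ^ m : ℕ) : ZMod p) =
      if (p - 1) ∣ m then (-1 : ZMod p) else 0 := by
  haveI : Fact p.Prime := ⟨hp⟩
  push_cast
  have h1 : ∑ k ∈ range p, (k : ZMod p) ^ m = ∑ x : ZMod p, x ^ m := by
    rw [← Fin.sum_univ_eq_sum_range]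
    apply Fintype.sum_bijective (fun i : Fin p => ((i : ℕ) : ZMod p))
    · constructor
      · intro a b hab
        have := congrArg ZMod.val hab
        rwa [ZMod.val_cast_of_lt a.2, ZMod.val_cast_of_lt b.2, Fin.val_inj] at this
      · intro x
        exact ⟨⟨x.val, x.val_lt⟩, ZMod.natCast_rightInverse x⟩
    · intro x; rfl
  rw [h1]
  classical
  have h2 : ∑ x : ZMod p, x ^ m = ∑ x : (ZMod p)ˣ, ((x : ZMod p)) ^ m := by
    let φ : (ZMod p)ˣ ↪ ZMod p := ⟨fun x ↦ x, fun _ _ h => Units.ext h⟩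
    have huniv : (univ.map φ) = univ \ {(0 : ZMod p)} := by
      ext x
      simp only [mem_map, mem_univ, Function.Embedding.coeFn_mk, true_and, mem_sdiff,
        mem_singleton, φ]; exact isUnit_iff_ne_zero
    calc
      ∑ x : ZMod p, x ^ m = ∑ x ∈ univ \ {(0 : ZMod p)}, x ^ m := by
        rw [← Finset.sum_sdiff (Finset.subset_univ ({0} : Finset (ZMod p))),
          Finset.sum_singleton, zero_pow hm.ne', add_zero]
      _ = ∑ x : (ZMod p)ˣ, ((x : ZMod p)) ^ m := by
        rw [← huniv, Finset.sum_map]; rfl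
  rw [h2]
  have := FiniteField.sum_pow_units (ZMod p) m
  rw [ZMod.card p] at this
  exact this

lemma padicValNat_add_two_le {p j : ℕ} (hp : 3 ≤ p) (hpp : p.Prime) (hj : 2 ≤ j) :
    padicValNat p j + 2 ≤ j := by
  set ν := padicValNat p j with hν
  have hdvd : p ^ ν ∣ j := pow_padicValNat_dvd
  have hle : p ^ ν ≤ j := Nat.le_of_dvd (by omega) hdvd
  rcases Nat.eq_zero_or_pos ν with h0 | h1
  · omega
  · have h3 : 3 ^ ν ≤ p ^ ν := Nat.pow_le_pow_left hp ν
    have h4 : ν + 2 ≤ 3 ^ ν := by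
      clear_value ν
      clear hν hdvd hle h3
      induction ν with
      | zero => omega
      | succ n ih =>
        rcases Nat.eq_zero_or_pos n with rfl | hn
        · norm_num
        · have := ih hn
          have h5 : 3 ^ n ≥ 1 := Nat.one_le_pow _ _ (by norm_num)
          calc n + 1 + 2 ≤ 3 ^ n + 1 := by omega
          _ ≤ 3 ^ (n+1) := by rw [pow_succ]; omega
    omega

lemma padicNorm_nat_pow_div (p : ℕ) (hp : p.Prime) [Fact p.Prime] (j : ℕ) (hj : j ≠ 0) :
    padicNorm p ((p : ℚ) ^ j / (j : ℚ)) = ((p : ℚ))⁻¹ ^ (j - padicValNat p j) := by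
  have hp1 : (1 : ℚ) < p := by exact_mod_cast hp.one_lt
  have hp0 : (p : ℚ) ≠ 0 := by positivity
  set ν := padicValNat p j with hν
  obtain ⟨u, hu⟩ : p ^ ν ∣ j := pow_padicValNat_dvd
  have hpu : ¬ p ∣ u := by
    intro hdvd
    obtain ⟨v, rfl⟩ := hdvd
    have : p ^ (ν + 1) ∣ j := ⟨v, by rw [hu]; ring⟩
    have := (padicValNat_dvd_iff_le (p := p) (by omega)).mp this
    omega
  have hν_le : ν ≤ j := by
    have : p ^ ν ≤ j := Nat.le_of_dvd (by omega) pow_padicValNat_dvd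
    calc ν ≤ p ^ ν := Nat.le_of_lt (Nat.lt_pow_self hp.one_lt)
    _ ≤ j := this
  have hnormp : padicNorm p ((p:ℚ)) = (p:ℚ)⁻¹ := padicNorm.padicNorm_p hp.one_lt
  have hppow : ∀ n : ℕ, padicNorm p ((p:ℚ) ^ n) = ((p:ℚ)⁻¹) ^ n := by
    intro n
    rw [IsAbsoluteValue.abv_pow (padicNorm p), hnormp]
  have hu1 : padicNorm p ((u:ℚ)) = 1 := (padicNorm.nat_eq_one_iff u).mpr hpu
  have hj' : (j : ℚ) = (p:ℚ) ^ ν * (u : ℚ) := by exact_mod_cast congrArg (Nat.cast : ℕ → ℚ) hu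
  rw [padicNorm.div, hj', padicNorm.mul, hppow, hppow, hu1, mul_one,
    pow_sub₀ _ (by positivity) hν_le, div_eq_mul_inv]

-- Faulhaber rearranged: p*B_m - S_m = -(sum of small terms)
lemma faulhaber_rearranged (p : ℕ) (hp : 0 < p) (m : ℕ) :
    (p : ℚ) * bernoulli m - (∑ k ∈ range p, (k : ℚ) ^ m) =
      -(∑ i ∈ range m,
        bernoulli i * (m.choose i : ℚ) * ((p : ℚ) ^ (m + 1 - i) / ((m + 1 - i : ℕ) : ℚ))) := by
  have hF := sum_range_pow p m
  rw [Finset.sum_range_succ] at hF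
  have hm1 : ((m : ℚ) + 1) ≠ 0 := by positivity
  have hlast : bernoulli m * (((m+1).choose m : ℕ) : ℚ) * (p:ℚ) ^ (m + 1 - m) / ((m:ℚ)+1)
      = (p : ℚ) * bernoulli m := by
    rw [Nat.choose_succ_self_right, Nat.add_sub_cancel_left]
    push_cast
    field_simp
  have hterm : ∀ i ∈ range m,
      bernoulli i * (((m+1).choose i : ℕ) : ℚ) * (p:ℚ) ^ (m + 1 - i) / ((m:ℚ)+1)
      = bernoulli i * (m.choose i : ℚ) * ((p : ℚ) ^ (m + 1 - i) / ((m + 1 - i : ℕ) : ℚ)) := by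
    intro i hi
    rw [mem_range] at hi
    have hkey : (m.choose i : ℚ) * ((m:ℚ) + 1) = (((m+1).choose i : ℕ) : ℚ) * ((m + 1 - i : ℕ) : ℚ) := by
      exact_mod_cast congrArg (Nat.cast : ℕ → ℚ) (Nat.choose_mul_succ_eq m i)
    have hji : ((m + 1 - i : ℕ) : ℚ) ≠ 0 := by
      have : 0 < m + 1 - i := by omega
      positivity
    rw [← mul_div_assoc, div_eq_div_iff hm1 hji]
    linear_combination (-(bernoulli i * (p:ℚ) ^ (m + 1 - i))) * hkey
  rw [Finset.sum_congr rfl hterm, hlast] at hF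
  linarith [hF]

lemma aux_sum_bound (p : ℕ) (hp : p.Prime) (hp2 : p ≠ 2) (m : ℕ)
    (ih : ∀ i, i < m → padicNorm p (bernoulli i) ≤ p) :
    padicNorm p ((p : ℚ) * bernoulli m - ∑ k ∈ range p, (k : ℚ) ^ m) ≤ (p : ℚ)⁻¹ := by
  haveI : Fact p.Prime := ⟨hp⟩
  have hp3 : 3 ≤ p := by have := hp.two_le; omega
  have hp1 : (1:ℚ) < p := by exact_mod_cast hp.one_lt
  have hpinv_nonneg : (0:ℚ) ≤ (p:ℚ)⁻¹ := by positivity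
  have hpinv_le_one : (p:ℚ)⁻¹ ≤ 1 := by
    rw [inv_le_one_iff₀]; right; linarith
  rw [faulhaber_rearranged p hp.pos m, padicNorm.neg]
  apply padicNorm.sum_le' _ hpinv_nonneg
  intro i hi
  rw [mem_range] at hi
  set j := m + 1 - i with hjdef
  have hj2 : 2 ≤ j := by omega
  have hν : padicValNat p j + 2 ≤ j := padicValNat_add_two_le hp3 hp hj2
  rw [padicNorm.mul, padicNorm.mul, padicNorm_nat_pow_div p hp j (by omega)]
  have h1 : padicNorm p (bernoulli i) ≤ p := ih i hi
  have h2 : padicNorm p ((m.choose i : ℚ)) ≤ 1 := padicNorm.of_nat _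
  have h3 : ((p:ℚ)⁻¹) ^ (j - padicValNat p j) ≤ ((p:ℚ)⁻¹) ^ 2 :=
    pow_le_pow_of_le_one hpinv_nonneg hpinv_le_one (by omega)
  calc padicNorm p (bernoulli i) * padicNorm p ((m.choose i : ℚ)) *
        ((p:ℚ)⁻¹) ^ (j - padicValNat p j)
      ≤ (p : ℚ) * 1 * ((p:ℚ)⁻¹) ^ 2 := by
        apply mul_le_mul (mul_le_mul h1 h2 (padicNorm.nonneg _) (by linarith)) h3
          (by positivity) (by positivity)
    _ = (p:ℚ)⁻¹ := by
        field_simp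

lemma norm_from_pmul (p : ℕ) (hp : p.Prime) (m : ℕ) {t : ℚ}
    (h : padicNorm p ((p : ℚ) * bernoulli m) ≤ t) :
    padicNorm p (bernoulli m) ≤ (p : ℚ) * t := by
  haveI : Fact p.Prime := ⟨hp⟩
  have hp0 : (0:ℚ) < p := by exact_mod_cast hp.pos
  rw [padicNorm.mul, padicNorm.padicNorm_p hp.one_lt] at h
  calc padicNorm p (bernoulli m) = (p:ℚ) * ((p:ℚ)⁻¹ * padicNorm p (bernoulli m)) := by
        field_simp
    _ ≤ (p:ℚ) * t := by
        apply mul_le_mul_of_nonneg_left h (le_of_lt hp0)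

lemma sum_norm_le_one (p : ℕ) (hp : p.Prime) (m : ℕ) :
    padicNorm p (∑ k ∈ range p, (k : ℚ) ^ m) ≤ 1 := by
  haveI : Fact p.Prime := ⟨hp⟩
  apply padicNorm.sum_le' _ zero_le_one
  intro i _
  have : ((i:ℚ)) ^ m = ((i ^ m : ℕ) : ℚ) := by push_cast; ring
  rw [this]
  exact padicNorm.of_nat _

lemma bern_norm_le (p : ℕ) (hp : p.Prime) (hp2 : p ≠ 2) :
    ∀ m, padicNorm p (bernoulli m) ≤ p := by
  haveI : Fact p.Prime := ⟨hp⟩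
  intro m
  induction m using Nat.strong_induction_on with
  | _ m ih =>
    have h1 := aux_sum_bound p hp hp2 m (fun i hi => ih i hi)
    have h2 := sum_norm_le_one p hp m
    have hpinv_le_one : (p:ℚ)⁻¹ ≤ 1 := by
      rw [inv_le_one_iff₀]; right; exact_mod_cast hp.one_le
    have h3 : padicNorm p ((p : ℚ) * bernoulli m) ≤ 1 := by
      have := padicNorm.nonarchimedean (p := p)
        (q := (p : ℚ) * bernoulli m - ∑ k ∈ range p, (k : ℚ) ^ m)
        (r := ∑ k ∈ range p, (k : ℚ) ^ m)
      rw [sub_add_cancel] at this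
      exact this.trans (max_le (h1.trans hpinv_le_one) h2)
    have := norm_from_pmul p hp m h3
    simpa using this

lemma bern_norm_le_one (p : ℕ) (hp : p.Prime) (hp2 : p ≠ 2) (m : ℕ) (hm : 0 < m)
    (hnd : ¬ (p - 1) ∣ m) : padicNorm p (bernoulli m) ≤ 1 := by
  haveI : Fact p.Prime := ⟨hp⟩
  have h1 := aux_sum_bound p hp hp2 m (fun i _ => bern_norm_le p hp hp2 i)
  -- p divides the power sum
  have hdvd : p ∣ ∑ k ∈ range p, k ^ m := by
    rw [← ZMod.natCast_eq_zero_iff, sum_pow_zmod p m hp hm, if_neg hnd]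
  obtain ⟨c, hc⟩ := hdvd
  have hS : (∑ k ∈ range p, (k : ℚ) ^ m) = (p : ℚ) * (c : ℚ) := by
    have h' : ((∑ k ∈ range p, k ^ m : ℕ) : ℚ) = ((p * c : ℕ) : ℚ) := by rw [hc]
    push_cast at h' ⊢
    convert h' using 1
  have h2 : padicNorm p (∑ k ∈ range p, (k : ℚ) ^ m) ≤ (p:ℚ)⁻¹ := by
    rw [hS, padicNorm.mul, padicNorm.padicNorm_p hp.one_lt]
    calc (p:ℚ)⁻¹ * padicNorm p ((c:ℚ)) ≤ (p:ℚ)⁻¹ * 1 := by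
          apply mul_le_mul_of_nonneg_left (padicNorm.of_nat _) (by positivity)
      _ = (p:ℚ)⁻¹ := mul_one _
  have h3 : padicNorm p ((p : ℚ) * bernoulli m) ≤ (p:ℚ)⁻¹ := by
    have := padicNorm.nonarchimedean (p := p)
      (q := (p : ℚ) * bernoulli m - ∑ k ∈ range p, (k : ℚ) ^ m)
      (r := ∑ k ∈ range p, (k : ℚ) ^ m)
    rw [sub_add_cancel] at this
    exact this.trans (max_le h1 h2)
  have := norm_from_pmul p hp m h3
  rwa [mul_inv_cancel₀ (by exact_mod_cast hp.ne_zero : (p:ℚ) ≠ 0)] at this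

lemma two_cast_zmod3 : ((2:ℕ) : ZMod 3) = (-1 : ZMod 3) := by decide

lemma bern_ne_zero (m : ℕ) (hm : 0 < m) (he : 2 ∣ m) : bernoulli m ≠ 0 := by
  have hkey := two_cast_zmod3
  haveI : Fact (Nat.Prime 3) := ⟨by norm_num⟩
  intro h0
  have h1 := aux_sum_bound 3 (by norm_num) (by norm_num) m
    (fun i _ => bern_norm_le 3 (by norm_num) (by norm_num) i)
  rw [h0, mul_zero, zero_sub, padicNorm.neg] at h1
  have hlt : padicNorm 3 (∑ k ∈ range 3, (k : ℚ) ^ m) < 1 := by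
    refine lt_of_le_of_lt h1 ?_
    norm_num
  have hcast : (∑ k ∈ range 3, (k : ℚ) ^ m) = ((∑ k ∈ range 3, k ^ m : ℕ) : ℚ) := by
    push_cast; ring
  rw [hcast, padicNorm.nat_lt_one_iff] at hlt
  have h2 := sum_pow_zmod 3 m (by norm_num) hm
  have h3 : ((3:ℕ) - 1) ∣ m := by simpa using he
  rw [if_pos h3, (ZMod.natCast_eq_zero_iff _ _).mpr hlt] at h2
  have h4 : ((0:ℕ) : ZMod 3) = ((2:ℕ) : ZMod 3) := by
    rw [hkey]
    simpa using h2
  rw [ZMod.natCast_eq_natCast_iff] at h4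
  simp [Nat.ModEq] at h4

end AuxGenocchi



/-- The `ℓ`-Genocchi number `G_{2n} = ℓ(1 - ℓ^{2n})B_{2n}` (an integer). -/
noncomputable def Gnum (ℓ : ℕ) (n : ℕ) : ℚ :=
  (ℓ : ℚ) * (1 - (ℓ : ℚ) ^ (2 * n)) * bernoulli (2 * n)

/-- An odd prime `p` is `ℓ`-Genocchi irregular if `p` divides one of
`G_2, G_4, …, G_{p-3}`, i.e. `ν_p(G_{2k}) ≥ 1` for some `1 ≤ k ≤ (p-3)/2`. -/
noncomputable def GenocchiIrregular (ℓ : ℕ) (p : ℕ) : Prop :=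
  ∃ k : ℕ, 1 ≤ k ∧ k ≤ (p - 3) / 2 ∧ 1 ≤ padicValRat p (Gnum ℓ k)

/-- Let `ℓ` be a prime and `p` a prime congruent to the square of an odd integer
modulo `4ℓ`. Then `p` is `ℓ`-Genocchi irregular. -/
theorem genocchiIrregular_of_odd_square_mod (ℓ p : ℕ) (hℓ : ℓ.Prime)
    (hp : p.Prime) (h : ∃ β : ℤ, Odd β ∧ (p : ℤ) ≡ β ^ 2 [ZMOD (4 * ℓ)]) :
    GenocchiIrregular ℓ p := by
  obtain ⟨β, hβ, hcong⟩ := h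
  haveI : Fact p.Prime := ⟨hp⟩
  -- β² ≡ 1 mod 8
  have hβsq : (8 : ℤ) ∣ β ^ 2 - 1 := by
    obtain ⟨c, rfl⟩ := hβ
    obtain ⟨d, hd⟩ := Int.even_mul_succ_self c
    exact ⟨d, by linear_combination 4 * hd⟩
  -- p ≡ 1 mod 4
  have h4dvd : (4 : ℤ) ∣ ((4 * ℓ : ℕ) : ℤ) := by push_cast; exact ⟨ℓ, rfl⟩
  have hmod4 : (p : ℤ) ≡ 1 [ZMOD 4] := by
    refine (hcong.of_dvd h4dvd).trans ?_
    exact (Int.modEq_iff_dvd.mpr (dvd_trans ⟨2, by norm_num⟩ hβsq)).symm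
  have hp4 : p % 4 = 1 := by
    have h1 : ((p % 4 : ℕ) : ℤ) = (p : ℤ) % 4 := by push_cast; rfl
    have h2 : (p : ℤ) % 4 = 1 % 4 := hmod4
    omega
  have hp5 : 5 ≤ p := by
    have := hp.two_le
    rcases Nat.lt_or_ge p 5 with h5 | h5
    · interval_cases p <;> simp_all <;> omega
    · exact h5
  set t := p / 4 with htdef
  have hpt : p = 4 * t + 1 := by omega
  have ht1 : 1 ≤ t := by omega
  -- Bernoulli facts
  have hBle : padicNorm p (bernoulli (2 * t)) ≤ 1 := by
    apply bern_norm_le_one p hp (by omega) (2 * t) (by omega)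
    intro hdvd
    have := Nat.le_of_dvd (by omega) hdvd
    omega
  have hBne : bernoulli (2 * t) ≠ 0 := bern_ne_zero (2 * t) (by omega) ⟨t, rfl⟩
  have hp1Q : (1 : ℚ) < p := by exact_mod_cast hp.one_lt
  have hpinv_nonneg : (0:ℚ) ≤ (p:ℚ)⁻¹ := by positivity
  -- main norm bound
  have hnorm : padicNorm p (Gnum ℓ t) ≤ (p : ℚ)⁻¹ := by
    rw [Gnum, padicNorm.mul, padicNorm.mul]
    by_cases hcase : p ∣ ℓ
    · -- ℓ = p
      have hle : ℓ = p := ((Nat.prime_dvd_prime_iff_eq hp hℓ).mp hcase).symm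
      subst hle
      have h1 : padicNorm ℓ ((ℓ:ℚ)) = (ℓ:ℚ)⁻¹ := padicNorm.padicNorm_p hℓ.one_lt
      have h2 : padicNorm ℓ (1 - (ℓ:ℚ) ^ (2*t)) ≤ 1 := by
        have : (1 - (ℓ:ℚ) ^ (2*t)) = (((1 - (ℓ:ℤ) ^ (2*t)) : ℤ) : ℚ) := by push_cast; ring
        rw [this]; exact padicNorm.of_int _
      calc padicNorm ℓ ((ℓ:ℚ)) * padicNorm ℓ (1 - (ℓ:ℚ) ^ (2*t)) * padicNorm ℓ (bernoulli (2*t))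
          ≤ (ℓ:ℚ)⁻¹ * 1 * 1 := by
            rw [h1]
            apply mul_le_mul (mul_le_mul le_rfl h2 (padicNorm.nonneg _) (by positivity)) hBle
              (padicNorm.nonneg _) (by positivity)
        _ = (ℓ:ℚ)⁻¹ := by ring
    · -- ℓ ≠ p : quadratic reciprocity
      have hne0' : ((ℓ:ℤ) : ZMod p) ≠ 0 := by
        rw [Ne, ZMod.intCast_zmod_eq_zero_iff_dvd]
        exact_mod_cast hcase
      have hsq : IsSquare ((ℓ:ℤ) : ZMod p) := by
        by_cases hl2 : ℓ = 2
        · subst hl2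
          have h8 : (p : ℤ) ≡ 1 [ZMOD 8] := by
            refine (hcong.of_dvd (by norm_num)).trans ?_
            exact (Int.modEq_iff_dvd.mpr hβsq).symm
          have hp8 : p % 8 = 1 := by
            have h1 : ((p % 8 : ℕ) : ℤ) = (p : ℤ) % 8 := by push_cast; rfl
            have h2 : (p : ℤ) % 8 = 1 % 8 := h8
            omega
          have := (ZMod.exists_sq_eq_two_iff (p := p) (by omega)).mpr (Or.inl hp8)
          convert this using 2
          push_cast; ring
        · haveI : Fact ℓ.Prime := ⟨hℓ⟩
          have hne0 : ((p:ℤ) : ZMod ℓ) ≠ 0 := by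
            rw [Ne, ZMod.intCast_zmod_eq_zero_iff_dvd]
            intro hdvd
            have : ℓ ∣ p := by exact_mod_cast hdvd
            have : ℓ = p := (Nat.prime_dvd_prime_iff_eq hℓ hp).mp this
            exact hcase (this ▸ dvd_refl p)
          have hsqℓ : IsSquare ((p:ℤ) : ZMod ℓ) := by
            have hcongl : (p : ℤ) ≡ β ^ 2 [ZMOD (ℓ : ℤ)] :=
              hcong.of_dvd (by push_cast; exact ⟨4, by ring⟩)
            have := (ZMod.intCast_eq_intCast_iff _ _ _).mpr hcongl
            rw [this]
            exact ⟨(β : ZMod ℓ), by push_cast; ring⟩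
          have hl1 : legendreSym ℓ (p : ℤ) = 1 := (legendreSym.eq_one_iff _ hne0).mpr hsqℓ
          have hQR := legendreSym.quadratic_reciprocity_one_mod_four (p := p) (q := ℓ) hp4 hl2
          have hp1 : legendreSym p (ℓ : ℤ) = 1 := by rw [← hQR]; exact hl1
          exact (legendreSym.eq_one_iff _ hne0').mp hp1
      have heuler := (ZMod.euler_criterion p hne0').mp hsq
      have hhalf : p / 2 = 2 * t := by omega
      rw [hhalf] at heuler
      have hdpow : (p:ℤ) ∣ (ℓ:ℤ) ^ (2*t) - 1 := by
        rw [← ZMod.intCast_zmod_eq_zero_iff_dvd, Int.cast_sub, Int.cast_pow, Int.cast_one,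
          heuler, sub_self]
      obtain ⟨c, hc⟩ := hdpow
      have hfact : (1 - (ℓ:ℚ) ^ (2*t)) = -(((p : ℤ) * c : ℤ) : ℚ) := by
        rw [← hc]; push_cast; ring
      have h2 : padicNorm p (1 - (ℓ:ℚ) ^ (2*t)) ≤ (p:ℚ)⁻¹ := by
        rw [hfact, padicNorm.neg]
        have : (((p : ℤ) * c : ℤ) : ℚ) = (p : ℚ) * ((c : ℤ) : ℚ) := by push_cast; ring
        rw [this, padicNorm.mul, padicNorm.padicNorm_p hp.one_lt]
        calc (p:ℚ)⁻¹ * padicNorm p ((c : ℤ) : ℚ) ≤ (p:ℚ)⁻¹ * 1 :=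
              mul_le_mul_of_nonneg_left (padicNorm.of_int _) hpinv_nonneg
          _ = (p:ℚ)⁻¹ := mul_one _
      have h1 : padicNorm p ((ℓ:ℚ)) ≤ 1 := padicNorm.of_nat _
      calc padicNorm p ((ℓ:ℚ)) * padicNorm p (1 - (ℓ:ℚ) ^ (2*t)) * padicNorm p (bernoulli (2*t))
          ≤ 1 * (p:ℚ)⁻¹ * 1 := by
            apply mul_le_mul (mul_le_mul h1 h2 (padicNorm.nonneg _) zero_le_one) hBle
              (padicNorm.nonneg _) (by positivity)
        _ = (p:ℚ)⁻¹ := by ring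
  -- Gnum ≠ 0
  have hG0 : Gnum ℓ t ≠ 0 := by
    rw [Gnum]
    apply mul_ne_zero (mul_ne_zero _ _) hBne
    · exact_mod_cast hℓ.ne_zero
    · have hlt : (1:ℚ) < (ℓ:ℚ) ^ (2*t) := by
        have : 1 < ℓ ^ (2*t) := Nat.one_lt_pow (by omega) hℓ.one_lt
        exact_mod_cast this
      exact sub_ne_zero.mpr (by linarith)
  -- conclude
  refine ⟨t, ht1, by omega, ?_⟩
  rw [padicNorm, if_neg hG0] at hnorm
  have : (p:ℚ)⁻¹ = (p:ℚ) ^ (-1 : ℤ) := by rw [zpow_neg_one]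
  rw [this, zpow_le_zpow_iff_right₀ hp1Q] at hnorm
  linarith
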